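/- Separation of stable leaves under minimal captivity (Lemma 7.8, second inequality): Let τ ∈ C^∞(φ(I);ℝ) and define the canonical maps φ̃_{i,j}(x,ξ) := (φ_{i,j}(x), ξ/φ'_{i,j}(x) + τ'(φ_{i,j}(x))) and the stable-leaf functions ζ_{w_+}(x) := −∑_{k≥1} (φ_{w_{0,k}})'(x) τ'(φ_{w_{0,k}}(x)). Assume minimal captivity: there exists ε > 0 such that for every point (x,ξ) of the closed ε-neighborhood 𝒦_ε of the trapped set 𝒦 of the multivalued map φ̃, at most one of the points φ̃_{i,j}(x,ξ) (over j with i ⤳ j, where x ∈ I_i) lies in 𝒦_ε. Assume a ∈ ℕ is such that K_a := φ^a(I) satisfies (x, ζ_{w_+}(x)) ∈ 𝒦_ε for every w_+ ∈ W_+ and every x ∈ K_a ∩ I_{w_0}. Then there exists C > 0 such that for all w_+, w'_+ ∈ W_+ with w_0 = w'_0 and w_+ ≠ w'_+, setting n_1 := min{k ≥ 0 : w_k ≠ w'_k} (so n_1 ≥ 1), one has for every x ∈ K_a ∩ I_{w_0}: |ζ_{w_+}(x) − ζ_{w'_+}(x)| ≥ C · (φ_{w_{0,n_1−1}})'(x),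 with the convention that the empty composition (n_1 = 1) is the identity. -/

import Mathlib

open Set

/-- Right-infinite admissible words. -/
def Wplus (N : ℕ) (adj : Fin N → Fin N → Prop) : Type :=
  {w : ℕ → Fin N // ∀ n : ℕ, adj (w n) (w (n + 1))}

/-- Forward composition `φ_{w_{0,k}} = φ_{w_{k−1},w_k} ∘ ⋯ ∘ φ_{w_0,w_1}`
(an empty composition, `k = 0`, is the identity). -/
def compFwd {N : ℕ} (φm : Fin N → Fin N → ℝ → ℝ) (w : ℕ → Fin N) : ℕ → ℝ → ℝ
  | 0 => id
  | k + 1 => φm (w k) (w (k + 1)) ∘ compFwd φm w k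

/-- The canonical map of one branch,
`φ̃_{i,j}(x,ξ) = (φ_{i,j}(x), ξ/φ'_{i,j}(x) + τ'(φ_{i,j}(x)))`. -/
noncomputable def canMap (τ : ℝ → ℝ) (φij : ℝ → ℝ) (p : ℝ × ℝ) : ℝ × ℝ :=
  (φij p.1, p.2 / deriv φij p.1 + deriv τ (φij p.1))

/-- The stable-leaf function
`ζ_{w₊}(x) = −∑_{k≥1} (φ_{w_{0,k}})'(x) τ'(φ_{w_{0,k}}(x))`. -/
noncomputable def zetaW {N : ℕ} (φm : Fin N → Fin N → ℝ → ℝ) (τ : ℝ → ℝ)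
    (w : ℕ → Fin N) (x : ℝ) : ℝ :=
  -∑' k : ℕ, deriv (compFwd φm w (k + 1)) x * deriv τ (compFwd φm w (k + 1) x)

/-- The trapped set `𝒦 ⊂ I × ℝ` of the multivalued canonical map: points
through which there passes a complete bounded admissible orbit. -/
def trappedPhase {N : ℕ} (I : Fin N → Set ℝ) (adj : Fin N → Fin N → Prop)
    (φm : Fin N → Fin N → ℝ → ℝ) (τ : ℝ → ℝ) : Set (ℝ × ℝ) :=
  {p | ∃ (b : ℤ → Fin N) (q : ℤ → ℝ × ℝ),
    q 0 = p ∧ (∀ k : ℤ, adj (b k) (b (k + 1))) ∧ (∀ k : ℤ, (q k).1 ∈ I (b k)) ∧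
    (∀ k : ℤ, q (k + 1) = canMap τ (φm (b k) (b (k + 1))) (q k)) ∧
    ∃ R : ℝ, ∀ k : ℤ, |(q k).2| ≤ R}

/-- The closed `ε`-neighborhood `𝒦_ε` of the trapped set. -/
def trappedPhaseNbhd {N : ℕ} (I : Fin N → Set ℝ) (adj : Fin N → Fin N → Prop)
    (φm : Fin N → Fin N → ℝ → ℝ) (τ : ℝ → ℝ) (ε : ℝ) : Set (ℝ × ℝ) :=
  {p | ∃ q ∈ trappedPhase I adj φm τ, max |p.1 - q.1| |p.2 - q.2| ≤ ε}

/-- `K_a = φ^a(I)`: the union of the images of the intervals under all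
admissible words of length `a + 1`. -/
def Kiter {N : ℕ} (I : Fin N → Set ℝ) (adj : Fin N → Fin N → Prop)
    (φm : Fin N → Fin N → ℝ → ℝ) (a : ℕ) : Set ℝ :=
  ⋃ (v : ℕ → Fin N) (_ : ∀ k < a, adj (v k) (v (k + 1))), compFwd φm v a '' I (v 0)

namespace SLSaux

variable {N : ℕ} {I : Fin N → Set ℝ} {adj : Fin N → Fin N → Prop}
  {φm : Fin N → Fin N → ℝ → ℝ} {θ : ℝ} {τ : ℝ → ℝ}

/-- shift of a word -/
def sh (m : ℕ) (w : ℕ → Fin N) : ℕ → Fin N := fun n => w (m + n)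

lemma compFwd_congr {w w' : ℕ → Fin N} : ∀ {k : ℕ}, (∀ n ≤ k, w n = w' n) →
    compFwd φm w k = compFwd φm w' k
  | 0, _ => rfl
  | k + 1, h => by
    have ih : compFwd φm w k = compFwd φm w' k :=
      compFwd_congr (fun n hn => h n (hn.trans (Nat.le_succ k)))
    show φm (w k) (w (k+1)) ∘ compFwd φm w k = φm (w' k) (w' (k+1)) ∘ compFwd φm w' k
    rw [ih, h k (Nat.le_succ k), h (k+1) le_rfl]

lemma compFwd_split (w : ℕ → Fin N) (m : ℕ) : ∀ k,
    compFwd φm w (m + k) = compFwd φm (sh m w) k ∘ compFwd φm w m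
  | 0 => (Function.id_comp _).symm
  | k + 1 => by
    show φm (w (m+k)) (w (m+k+1)) ∘ compFwd φm w (m+k) = _
    rw [compFwd_split w m k]
    rfl

lemma smooth_compFwd (hsmooth : ∀ i j, adj i j → ContDiff ℝ (⊤ : ℕ∞) (φm i j)) :
    ∀ (w : ℕ → Fin N) (k : ℕ), (∀ j < k, adj (w j) (w (j+1))) →
    ContDiff ℝ (⊤ : ℕ∞) (compFwd φm w k)
  | _, 0, _ => contDiff_id
  | w, k + 1, h =>
    (hsmooth _ _ (h k (Nat.lt_succ_self k))).comp
      (smooth_compFwd hsmooth w k (fun j hj => h j (hj.trans (Nat.lt_succ_self k))))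

lemma mem_compFwd (hinto : ∀ i j, adj i j → φm i j '' I i ⊆ interior (I j)) :
    ∀ (w : ℕ → Fin N) (k : ℕ), (∀ j < k, adj (w j) (w (j+1))) →
    ∀ {x : ℝ}, x ∈ I (w 0) → compFwd φm w k x ∈ I (w k)
  | _, 0, _, _, hx => hx
  | w, k + 1, h, x, hx => by
    have ih := mem_compFwd hinto w k (fun j hj => h j (hj.trans (Nat.lt_succ_self k))) hx
    exact interior_subset
      (hinto _ _ (h k (Nat.lt_succ_self k)) (Set.mem_image_of_mem _ ih))

lemma deriv_compFwd_succ (hsmooth : ∀ i j, adj i j → ContDiff ℝ (⊤ : ℕ∞) (φm i j))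
    (w : ℕ → Fin N) (k : ℕ) (h : ∀ j < k + 1, adj (w j) (w (j+1))) (x : ℝ) :
    deriv (compFwd φm w (k+1)) x
      = deriv (φm (w k) (w (k+1))) (compFwd φm w k x) * deriv (compFwd φm w k) x := by
  have h1 : DifferentiableAt ℝ (φm (w k) (w (k+1))) (compFwd φm w k x) :=
    ((hsmooth _ _ (h k (Nat.lt_succ_self k))).differentiable (by simp)).differentiableAt
  have h2 : DifferentiableAt ℝ (compFwd φm w k) x :=
    ((smooth_compFwd hsmooth w k (fun j hj => h j (hj.trans (Nat.lt_succ_self k)))).differentiable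
      (by simp)).differentiableAt
  exact deriv_comp (x := x) h1 h2

lemma deriv_compFwd_pos (hsmooth : ∀ i j, adj i j → ContDiff ℝ (⊤ : ℕ∞) (φm i j))
    (hcontr : ∀ i j, adj i j → ∀ x ∈ I i, 0 < deriv (φm i j) x ∧ deriv (φm i j) x ≤ θ)
    (hinto : ∀ i j, adj i j → φm i j '' I i ⊆ interior (I j))
    (hθ0 : 0 < θ) :
    ∀ (w : ℕ → Fin N) (k : ℕ), (∀ j < k, adj (w j) (w (j+1))) →
    ∀ {x : ℝ}, x ∈ I (w 0) →
    0 < deriv (compFwd φm w k) x ∧ deriv (compFwd φm w k) x ≤ θ ^ k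
  | _, 0, _, x, hx => by simp [compFwd]
  | w, k + 1, h, x, hx => by
    have hk : ∀ j < k, adj (w j) (w (j+1)) := fun j hj => h j (hj.trans (Nat.lt_succ_self k))
    have ih := deriv_compFwd_pos hsmooth hcontr hinto hθ0 w k hk hx
    have hmem := mem_compFwd (φm := φm) hinto w k hk hx
    have hc := hcontr _ _ (h k (Nat.lt_succ_self k)) _ hmem
    rw [deriv_compFwd_succ hsmooth w k h x]
    constructor
    · exact mul_pos hc.1 ih.1
    · calc deriv (φm (w k) (w (k+1))) (compFwd φm w k x) * deriv (compFwd φm w k) x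
          ≤ θ * θ ^ k := mul_le_mul hc.2 ih.2 ih.1.le hθ0.le
        _ = θ ^ (k+1) := (pow_succ' θ k).symm

lemma deriv_compFwd_split (hsmooth : ∀ i j, adj i j → ContDiff ℝ (⊤ : ℕ∞) (φm i j))
    (w : ℕ → Fin N) (m k : ℕ) (h : ∀ j < m + k, adj (w j) (w (j+1))) (x : ℝ) :
    deriv (compFwd φm w (m + k)) x
      = deriv (compFwd φm (sh m w) k) (compFwd φm w m x) * deriv (compFwd φm w m) x := by
  have hshadm : ∀ j < k, adj (sh m w j) (sh m w (j+1)) := fun j hj =>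
    h (m + j) (by omega)
  have h1 : DifferentiableAt ℝ (compFwd φm (sh m w) k) (compFwd φm w m x) :=
    ((smooth_compFwd hsmooth _ k hshadm).differentiable (by simp)).differentiableAt
  have h2 : DifferentiableAt ℝ (compFwd φm w m) x :=
    ((smooth_compFwd hsmooth w m (fun j hj => h j (by omega))).differentiable
      (by simp)).differentiableAt
  rw [compFwd_split w m k]
  exact deriv_comp (x := x) h1 h2

/-- the term sequence of the zeta series -/
noncomputable def zterm (φm : Fin N → Fin N → ℝ → ℝ) (τ : ℝ → ℝ) (w : ℕ → Fin N) (x : ℝ)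
    (k : ℕ) : ℝ :=
  deriv (compFwd φm w (k + 1)) x * deriv τ (compFwd φm w (k + 1) x)

lemma zetaW_eq (w : ℕ → Fin N) (x : ℝ) : zetaW φm τ w x = -∑' k, zterm φm τ w x k := rfl

lemma zterm_bound {M : ℝ} (hsmooth : ∀ i j, adj i j → ContDiff ℝ (⊤ : ℕ∞) (φm i j))
    (hcontr : ∀ i j, adj i j → ∀ x ∈ I i, 0 < deriv (φm i j) x ∧ deriv (φm i j) x ≤ θ)
    (hinto : ∀ i j, adj i j → φm i j '' I i ⊆ interior (I j))
    (hθ0 : 0 < θ)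
    (hM : ∀ i : Fin N, ∀ y ∈ I i, |deriv τ y| ≤ M)
    (w : ℕ → Fin N) (k : ℕ) (hadm : ∀ j < k + 1, adj (w j) (w (j+1)))
    {x : ℝ} (hx : x ∈ I (w 0)) :
    |zterm φm τ w x k| ≤ M * θ ^ (k + 1) := by
  have hd := deriv_compFwd_pos hsmooth hcontr hinto hθ0 w (k+1) hadm hx
  have hmem := mem_compFwd (φm := φm) hinto w (k+1) hadm hx
  have hM' := hM _ _ hmem
  have hM0 : 0 ≤ M := le_trans (abs_nonneg _) hM'
  calc |zterm φm τ w x k| = |deriv (compFwd φm w (k+1)) x| * |deriv τ (compFwd φm w (k+1) x)| :=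
        abs_mul _ _
    _ ≤ θ ^ (k+1) * M := by
        apply mul_le_mul _ hM' (abs_nonneg _) (pow_nonneg hθ0.le _)
        rw [abs_of_pos hd.1]; exact hd.2
    _ = M * θ ^ (k+1) := mul_comm _ _

lemma zterm_summable {M : ℝ} (hsmooth : ∀ i j, adj i j → ContDiff ℝ (⊤ : ℕ∞) (φm i j))
    (hcontr : ∀ i j, adj i j → ∀ x ∈ I i, 0 < deriv (φm i j) x ∧ deriv (φm i j) x ≤ θ)
    (hinto : ∀ i j, adj i j → φm i j '' I i ⊆ interior (I j))
    (hθ0 : 0 < θ) (hθ1 : θ < 1)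
    (hM : ∀ i : Fin N, ∀ y ∈ I i, |deriv τ y| ≤ M)
    (w : ℕ → Fin N) (hadm : ∀ n, adj (w n) (w (n+1)))
    {x : ℝ} (hx : x ∈ I (w 0)) :
    Summable (zterm φm τ w x) := by
  apply Summable.of_norm_bounded (g := fun k => M * θ ^ (k + 1))
  · have : Summable (fun k : ℕ => θ ^ k) := summable_geometric_of_lt_one hθ0.le hθ1
    simpa [pow_succ, mul_comm, mul_left_comm, mul_assoc] using
      ((this.mul_left M).mul_right θ)
  · intro k
    exact zterm_bound hsmooth hcontr hinto hθ0 hM w k (fun j _ => hadm j) hx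

lemma compFwd_one (w : ℕ → Fin N) : compFwd φm w 1 = φm (w 0) (w 1) := by
  show φm (w 0) (w 1) ∘ id = _
  simp

lemma sh_adm (w : ℕ → Fin N) (hadm : ∀ n, adj (w n) (w (n+1))) (m : ℕ) :
    ∀ n, adj (sh m w n) (sh m w (n+1)) := fun n => hadm (m + n)

/-- One-step self-similarity of ζ. -/
lemma zeta_step {M : ℝ} (hsmooth : ∀ i j, adj i j → ContDiff ℝ (⊤ : ℕ∞) (φm i j))
    (hcontr : ∀ i j, adj i j → ∀ x ∈ I i, 0 < deriv (φm i j) x ∧ deriv (φm i j) x ≤ θ)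
    (hinto : ∀ i j, adj i j → φm i j '' I i ⊆ interior (I j))
    (hθ0 : 0 < θ) (hθ1 : θ < 1)
    (hM : ∀ i : Fin N, ∀ y ∈ I i, |deriv τ y| ≤ M)
    (w : ℕ → Fin N) (hadm : ∀ n, adj (w n) (w (n+1)))
    {x : ℝ} (hx : x ∈ I (w 0)) :
    zetaW φm τ w x = deriv (φm (w 0) (w 1)) x *
      (zetaW φm τ (sh 1 w) (φm (w 0) (w 1) x) - deriv τ (φm (w 0) (w 1) x)) := by
  set y := φm (w 0) (w 1) x with hy_def
  set D := deriv (φm (w 0) (w 1)) x with hD_def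
  have hy : y ∈ I (w 1) := interior_subset (hinto _ _ (hadm 0) ⟨x, hx, rfl⟩)
  have hadm' : ∀ n, adj (sh 1 w n) (sh 1 w (n+1)) := sh_adm w hadm 1
  have hsum : Summable (zterm φm τ w x) :=
    zterm_summable hsmooth hcontr hinto hθ0 hθ1 hM w hadm hx
  have hsum' : Summable (zterm φm τ (sh 1 w) y) :=
    zterm_summable hsmooth hcontr hinto hθ0 hθ1 hM (sh 1 w) hadm' hy
  have hterm0 : zterm φm τ w x 0 = D * deriv τ y := by
    simp only [zterm, Nat.zero_add, compFwd_one]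
    rfl
  have hterm : ∀ k, zterm φm τ w x (k + 1) = D * zterm φm τ (sh 1 w) y k := by
    intro k
    have e : k + 1 + 1 = 1 + (k + 1) := by omega
    have hder : deriv (compFwd φm w (1 + (k+1))) x
        = deriv (compFwd φm (sh 1 w) (k+1)) (compFwd φm w 1 x) * deriv (compFwd φm w 1) x :=
      deriv_compFwd_split hsmooth w 1 (k+1) (fun j _ => hadm j) x
    have hval : compFwd φm w (1 + (k+1)) x = compFwd φm (sh 1 w) (k+1) (compFwd φm w 1 x) := by
      rw [compFwd_split w 1 (k+1)]; rfl
    have hcf1 : compFwd φm w 1 x = y := by rw [compFwd_one]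
    have hcd1 : deriv (compFwd φm w 1) x = D := by rw [compFwd_one]
    simp only [zterm, e, hder, hval, hcf1, hcd1]
    ring
  have : (∑' k, zterm φm τ w x k)
      = D * deriv τ y + D * ∑' k, zterm φm τ (sh 1 w) y k := by
    rw [Summable.tsum_eq_zero_add hsum, hterm0]
    congr 1
    rw [tsum_congr hterm, tsum_mul_left]
  rw [zetaW_eq, zetaW_eq, this]
  ring

lemma zetaW_congr_fun {w w' : ℕ → Fin N} (h : ∀ n, w n = w' n) (x : ℝ) :
    zetaW φm τ w x = zetaW φm τ w' x := by
  have : w = w' := funext h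
  rw [this]

/-- Iterated difference identity for ζ along two words agreeing up to index m. -/
lemma zeta_diff {M : ℝ} (hsmooth : ∀ i j, adj i j → ContDiff ℝ (⊤ : ℕ∞) (φm i j))
    (hcontr : ∀ i j, adj i j → ∀ x ∈ I i, 0 < deriv (φm i j) x ∧ deriv (φm i j) x ≤ θ)
    (hinto : ∀ i j, adj i j → φm i j '' I i ⊆ interior (I j))
    (hθ0 : 0 < θ) (hθ1 : θ < 1)
    (hM : ∀ i : Fin N, ∀ y ∈ I i, |deriv τ y| ≤ M)
    (w w' : ℕ → Fin N) (hadm : ∀ n, adj (w n) (w (n+1)))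
    (hadm' : ∀ n, adj (w' n) (w' (n+1))) :
    ∀ (m : ℕ), (∀ j ≤ m, w j = w' j) → ∀ {x : ℝ}, x ∈ I (w 0) →
    zetaW φm τ w x - zetaW φm τ w' x = deriv (compFwd φm w m) x *
      (zetaW φm τ (sh m w) (compFwd φm w m x) - zetaW φm τ (sh m w') (compFwd φm w m x))
  | 0, hag, x, hx => by
    have h0 : (sh 0 w) = w := funext fun n => congrArg w (Nat.zero_add n)
    have h0' : (sh 0 w') = w' := funext fun n => congrArg w' (Nat.zero_add n)
    simp only [compFwd, h0, h0', deriv_id, id_eq, one_mul]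
  | m + 1, hag, x, hx => by
    have ih := zeta_diff hsmooth hcontr hinto hθ0 hθ1 hM w w' hadm hadm' m
      (fun j hj => hag j (hj.trans (Nat.le_succ m))) hx
    set y := compFwd φm w m x with hy_def
    have hy : y ∈ I (w m) := mem_compFwd (φm := φm) hinto w m (fun j _ => hadm j) hx
    have hstep := zeta_step hsmooth hcontr hinto hθ0 hθ1 hM (sh m w) (sh_adm w hadm m) hy
    have hy' : y ∈ I (w' m) := by rw [← hag m (Nat.le_succ m)]; exact hy
    have hstep' := zeta_step hsmooth hcontr hinto hθ0 hθ1 hM (sh m w') (sh_adm w' hadm' m) hy'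
    have e0 : sh m w' 0 = w m := (hag m (Nat.le_succ m)).symm
    have e1 : sh m w' 1 = w (m+1) := (hag (m+1) le_rfl).symm
    have esh : ∀ n, sh 1 (sh m w) n = sh (m+1) w n := fun n => by
      simp only [sh]; congr 1; omega
    have esh' : ∀ n, sh 1 (sh m w') n = sh (m+1) w' n := fun n => by
      simp only [sh]; congr 1; omega
    have hz : zetaW φm τ (sh m w) y = deriv (φm (w m) (w (m+1))) y *
        (zetaW φm τ (sh (m+1) w) (φm (w m) (w (m+1)) y) - deriv τ (φm (w m) (w (m+1)) y)) := by
      rw [hstep, zetaW_congr_fun esh]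
      rfl
    have hz' : zetaW φm τ (sh m w') y = deriv (φm (w m) (w (m+1))) y *
        (zetaW φm τ (sh (m+1) w') (φm (w m) (w (m+1)) y) - deriv τ (φm (w m) (w (m+1)) y)) := by
      rw [hstep', zetaW_congr_fun esh']
      rw [e0, e1]
    have hder : deriv (compFwd φm w (m+1)) x
        = deriv (φm (w m) (w (m+1))) y * deriv (compFwd φm w m) x :=
      deriv_compFwd_succ hsmooth w m (fun j _ => hadm j) x
    have hval : compFwd φm w (m+1) x = φm (w m) (w (m+1)) y := rfl
    rw [ih, hz, hz', hval, hder]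
    ring

lemma Kiter_stable (hIdisj : ∀ i j, i ≠ j → Disjoint (I i) (I j))
    (hinto : ∀ i j, adj i j → φm i j '' I i ⊆ interior (I j))
    {a : ℕ} {x : ℝ} {i j : Fin N} (hxK : x ∈ Kiter I adj φm a) (hxI : x ∈ I i)
    (hij : adj i j) : φm i j x ∈ Kiter I adj φm a := by
  simp only [Kiter, Set.mem_iUnion] at hxK
  obtain ⟨v, hv, x0, hx0, hx0e⟩ := hxK
  have hxa : x ∈ I (v a) := by
    rw [← hx0e]; exact mem_compFwd hinto v a hv hx0
  have hva : v a = i := by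
    by_contra h
    exact Set.disjoint_left.mp (hIdisj _ _ h) hxa hxI
  set v'' : ℕ → Fin N := fun n => if n ≤ a then v n else j with hv''
  have hv''n : ∀ n ≤ a, v'' n = v n := fun n hn => if_pos hn
  have hadm'' : ∀ k < a + 1, adj (v'' k) (v'' (k+1)) := by
    intro k hk
    rcases Nat.lt_or_ge k a with h | h
    · rw [hv''n k (by omega), hv''n (k+1) (by omega)]
      exact hv k h
    · have hka : k = a := by omega
      subst hka
      rw [hv''n k le_rfl, hva]
      have : v'' (k+1) = j := if_neg (by omega)
      rw [this]
      exact hij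
  have hcfeq : compFwd φm v a x0 = compFwd φm v'' a x0 := by
    rw [compFwd_congr (fun n hn => (hv''n n hn).symm)]
  set x1 : ℝ := φm (v'' 0) (v'' 1) x0 with hx1def
  have hx01 : x0 ∈ I (v'' 0) := by rw [hv''n 0 (Nat.zero_le a)]; exact hx0
  have hx1 : x1 ∈ I (v'' 1) :=
    interior_subset (hinto _ _ (hadm'' 0 (Nat.succ_pos a)) ⟨x0, hx01, rfl⟩)
  have hkey : φm i j x = compFwd φm (sh 1 v'') a x1 := by
    have h1 : φm i j x = compFwd φm v'' (a + 1) x0 := by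
      show φm i j x = φm (v'' a) (v'' (a+1)) (compFwd φm v'' a x0)
      rw [← hcfeq, ← hx0e, hv''n a le_rfl, hva]
      congr 1
      exact (if_neg (by omega)).symm
    have h2 : compFwd φm v'' (a + 1) x0 = compFwd φm (sh 1 v'') a (compFwd φm v'' 1 x0) := by
      have e : a + 1 = 1 + a := by omega
      rw [e, compFwd_split v'' 1 a]
      rfl
    rw [h1, h2, compFwd_one]
  rw [hkey]
  have hadm_u : ∀ k < a, adj (sh 1 v'' k) (sh 1 v'' (k+1)) := fun k hk =>
    hadm'' (1 + k) (by omega)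
  simp only [Kiter, Set.mem_iUnion]
  exact ⟨sh 1 v'', hadm_u, x1, hx1, rfl⟩

lemma compFwd_mem_Kiter (hIdisj : ∀ i j, i ≠ j → Disjoint (I i) (I j))
    (hinto : ∀ i j, adj i j → φm i j '' I i ⊆ interior (I j))
    {a : ℕ} (w : ℕ → Fin N) (hadm : ∀ n, adj (w n) (w (n+1))) :
    ∀ (m : ℕ) {x : ℝ}, x ∈ Kiter I adj φm a → x ∈ I (w 0) →
      compFwd φm w m x ∈ Kiter I adj φm a
  | 0, x, hxK, _ => hxK
  | m + 1, x, hxK, hxI => by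
    have ih := compFwd_mem_Kiter hIdisj hinto w hadm m hxK hxI
    have hmem : compFwd φm w m x ∈ I (w m) :=
      mem_compFwd (φm := φm) hinto w m (fun n _ => hadm n) hxI
    exact Kiter_stable hIdisj hinto ih hmem (hadm m)

lemma Kiter_isCompact (hIcc : ∀ i, ∃ a b : ℝ, a ≤ b ∧ I i = Set.Icc a b)
    (hsmooth : ∀ i j, adj i j → ContDiff ℝ (⊤ : ℕ∞) (φm i j)) (a : ℕ) :
    IsCompact (Kiter I adj φm a) := by
  classical
  have hIc : ∀ i, IsCompact (I i) := by
    intro i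
    obtain ⟨c, d, _, he⟩ := hIcc i
    rw [he]; exact isCompact_Icc
  set ext : (Fin (a+1) → Fin N) → (ℕ → Fin N) := fun t n =>
    if h : n < a + 1 then t ⟨n, h⟩ else t ⟨0, Nat.succ_pos a⟩ with hext
  have hKeq : Kiter I adj φm a = ⋃ (t : Fin (a+1) → Fin N),
      ⋃ (_ : ∀ k < a, adj (ext t k) (ext t (k+1))), compFwd φm (ext t) a '' I (ext t 0) := by
    apply Set.Subset.antisymm
    · rintro x hx
      simp only [Kiter, Set.mem_iUnion] at hx ⊢
      obtain ⟨v, hv, hxm⟩ := hx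
      refine ⟨fun m => v m, ?_, ?_⟩
      · intro k hk
        have e1 : ext (fun m : Fin (a+1) => v m) k = v k := by
          simp only [hext, dif_pos (show k < a + 1 by omega)]
        have e2 : ext (fun m : Fin (a+1) => v m) (k+1) = v (k+1) := by
          simp only [hext, dif_pos (show k + 1 < a + 1 by omega)]
        rw [e1, e2]; exact hv k hk
      · have e0 : ∀ n ≤ a, ext (fun m : Fin (a+1) => v m) n = v n := by
          intro n hn
          simp only [hext, dif_pos (show n < a + 1 by omega)]
        rw [compFwd_congr (w := ext (fun m : Fin (a+1) => v m)) (w' := v) (fun n hn => e0 n hn),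
          e0 0 (Nat.zero_le a)]
        exact hxm
    · rintro x hx
      simp only [Set.mem_iUnion] at hx
      obtain ⟨t, ht, hxm⟩ := hx
      simp only [Kiter, Set.mem_iUnion]
      exact ⟨ext t, ht, hxm⟩
  rw [hKeq]
  apply isCompact_iUnion
  intro t
  by_cases h : ∀ k < a, adj (ext t k) (ext t (k+1))
  · rw [Set.iUnion_eq_if, if_pos h]
    exact ((hIc _).image (smooth_compFwd hsmooth (ext t) a h).continuous)
  · rw [Set.iUnion_eq_if, if_neg h]
    exact isCompact_empty

/-- admissible-word phase domain -/
def Aadm (adj : Fin N → Fin N → Prop) : Set ((ℕ → Fin N) × ℝ) :=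
  {p | ∀ n, adj (p.1 n) (p.1 (n+1))}

lemma contOn_compFwd (hsmooth : ∀ i j, adj i j → ContDiff ℝ (⊤ : ℕ∞) (φm i j)) :
    ∀ k : ℕ, ContinuousOn (fun p : (ℕ → Fin N) × ℝ => compFwd φm p.1 k p.2) (Aadm adj)
  | 0 => continuous_snd.continuousOn
  | k + 1 => by
    intro p0 hp0
    have hadj : adj (p0.1 k) (p0.1 (k+1)) := hp0 k
    set U : Set ((ℕ → Fin N) × ℝ) := {p | p.1 k = p0.1 k ∧ p.1 (k+1) = p0.1 (k+1)} with hUdef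
    have hU : IsOpen U := by
      have : U = (fun p : (ℕ → Fin N) × ℝ => (p.1 k, p.1 (k+1))) ⁻¹'
          {(p0.1 k, p0.1 (k+1))} := by
        ext p; simp [hUdef, Prod.ext_iff]
      rw [this]
      exact (isOpen_discrete _).preimage
        (((continuous_apply k).comp continuous_fst).prodMk
          ((continuous_apply (k+1)).comp continuous_fst))
    have hUmem : U ∈ nhds p0 := hU.mem_nhds ⟨rfl, rfl⟩
    rw [← continuousWithinAt_inter hUmem]
    have hbase : ContinuousWithinAt
        (fun p : (ℕ → Fin N) × ℝ => φm (p0.1 k) (p0.1 (k+1)) (compFwd φm p.1 k p.2))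
        (Aadm adj ∩ U) p0 :=
      ((hsmooth _ _ hadj).continuous.continuousAt).comp_continuousWithinAt
        ((contOn_compFwd hsmooth k p0 hp0).mono Set.inter_subset_left)
    apply hbase.congr
    · intro p hp
      show φm (p.1 k) (p.1 (k+1)) (compFwd φm p.1 k p.2) = _
      rw [hp.2.1, hp.2.2]
    · rfl

lemma contOn_deriv_compFwd (hsmooth : ∀ i j, adj i j → ContDiff ℝ (⊤ : ℕ∞) (φm i j)) :
    ∀ k : ℕ, ContinuousOn (fun p : (ℕ → Fin N) × ℝ => deriv (compFwd φm p.1 k) p.2) (Aadm adj)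
  | 0 => by
    apply continuousOn_const.congr
    intro p _
    show deriv (compFwd φm p.1 0) p.2 = (1 : ℝ)
    exact deriv_id p.2
  | k + 1 => by
    intro p0 hp0
    have hadj : adj (p0.1 k) (p0.1 (k+1)) := hp0 k
    set U : Set ((ℕ → Fin N) × ℝ) := {p | p.1 k = p0.1 k ∧ p.1 (k+1) = p0.1 (k+1)} with hUdef
    have hU : IsOpen U := by
      have : U = (fun p : (ℕ → Fin N) × ℝ => (p.1 k, p.1 (k+1))) ⁻¹'
          {(p0.1 k, p0.1 (k+1))} := by
        ext p; simp [hUdef, Prod.ext_iff]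
      rw [this]
      exact (isOpen_discrete _).preimage
        (((continuous_apply k).comp continuous_fst).prodMk
          ((continuous_apply (k+1)).comp continuous_fst))
    have hUmem : U ∈ nhds p0 := hU.mem_nhds ⟨rfl, rfl⟩
    rw [← continuousWithinAt_inter hUmem]
    have hc1 : ContinuousWithinAt
        (fun p : (ℕ → Fin N) × ℝ =>
          deriv (φm (p0.1 k) (p0.1 (k+1))) (compFwd φm p.1 k p.2)) (Aadm adj ∩ U) p0 :=
      (((hsmooth _ _ hadj).continuous_deriv (by exact_mod_cast le_top)).continuousAt).comp_continuousWithinAt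
        ((contOn_compFwd hsmooth k p0 hp0).mono Set.inter_subset_left)
    have hc2 : ContinuousWithinAt
        (fun p : (ℕ → Fin N) × ℝ => deriv (compFwd φm p.1 k) p.2) (Aadm adj ∩ U) p0 :=
      (contOn_deriv_compFwd hsmooth k p0 hp0).mono Set.inter_subset_left
    apply (hc1.mul hc2).congr
    · intro p hp
      show deriv (compFwd φm p.1 (k+1)) p.2 = _
      rw [deriv_compFwd_succ hsmooth p.1 k (fun j _ => hp.1 j) p.2, hp.2.1, hp.2.2]
      rfl
    · show deriv (compFwd φm p0.1 (k+1)) p0.2 = _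
      rw [deriv_compFwd_succ hsmooth p0.1 k (fun j _ => hp0 j) p0.2]
      rfl

lemma contOn_zeta {M : ℝ} (hsmooth : ∀ i j, adj i j → ContDiff ℝ (⊤ : ℕ∞) (φm i j))
    (hcontr : ∀ i j, adj i j → ∀ x ∈ I i, 0 < deriv (φm i j) x ∧ deriv (φm i j) x ≤ θ)
    (hinto : ∀ i j, adj i j → φm i j '' I i ⊆ interior (I j))
    (hθ0 : 0 < θ) (hθ1 : θ < 1) (hτ : ContDiff ℝ (⊤ : ℕ∞) τ)
    (hM : ∀ i : Fin N, ∀ y ∈ I i, |deriv τ y| ≤ M) :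
    ContinuousOn (fun p : (ℕ → Fin N) × ℝ => zetaW φm τ p.1 p.2)
      {p : (ℕ → Fin N) × ℝ | (∀ n, adj (p.1 n) (p.1 (n+1))) ∧ p.2 ∈ I (p.1 0)} := by
  set A : Set ((ℕ → Fin N) × ℝ) :=
    {p | (∀ n, adj (p.1 n) (p.1 (n+1))) ∧ p.2 ∈ I (p.1 0)} with hAdef
  have hsub : A ⊆ Aadm adj := fun p hp => hp.1
  have hcont : ContinuousOn (fun p : (ℕ → Fin N) × ℝ => ∑' k, zterm φm τ p.1 p.2 k) A := by
    apply continuousOn_tsum (u := fun k => M * θ ^ (k + 1))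
    · intro k
      apply ContinuousOn.mul
      · exact (contOn_deriv_compFwd hsmooth (k+1)).mono hsub
      · exact ((hτ.continuous_deriv (by exact_mod_cast le_top)).comp_continuousOn
          ((contOn_compFwd hsmooth (k+1)).mono hsub))
    · have : Summable (fun k : ℕ => θ ^ k) := summable_geometric_of_lt_one hθ0.le hθ1
      simpa [pow_succ, mul_comm, mul_left_comm, mul_assoc] using
        ((this.mul_left M).mul_right θ)
    · intro k p hp
      exact zterm_bound hsmooth hcontr hinto hθ0 hM p.1 k (fun j _ => hp.1 j) hp.2
  exact hcont.neg

lemma canMap_zeta {M : ℝ} (hsmooth : ∀ i j, adj i j → ContDiff ℝ (⊤ : ℕ∞) (φm i j))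
    (hcontr : ∀ i j, adj i j → ∀ x ∈ I i, 0 < deriv (φm i j) x ∧ deriv (φm i j) x ≤ θ)
    (hinto : ∀ i j, adj i j → φm i j '' I i ⊆ interior (I j))
    (hθ0 : 0 < θ) (hθ1 : θ < 1)
    (hM : ∀ i : Fin N, ∀ y ∈ I i, |deriv τ y| ≤ M)
    (w : ℕ → Fin N) (hadm : ∀ n, adj (w n) (w (n+1))) {x : ℝ} (hx : x ∈ I (w 0)) :
    canMap τ (φm (w 0) (w 1)) (x, zetaW φm τ w x)
      = (φm (w 0) (w 1) x, zetaW φm τ (sh 1 w) (φm (w 0) (w 1) x)) := by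
  have hD := (hcontr _ _ (hadm 0) x hx).1
  have hstep := zeta_step hsmooth hcontr hinto hθ0 hθ1 hM w hadm hx
  unfold canMap
  refine Prod.ext rfl ?_
  show zetaW φm τ w x / deriv (φm (w 0) (w 1)) x + deriv τ (φm (w 0) (w 1) x) = _
  rw [hstep]
  field_simp
  ring

lemma zeta_ne {M : ℝ} {a : ℕ} {T : Set (ℝ × ℝ)}
    (hsmooth : ∀ i j, adj i j → ContDiff ℝ (⊤ : ℕ∞) (φm i j))
    (hcontr : ∀ i j, adj i j → ∀ x ∈ I i, 0 < deriv (φm i j) x ∧ deriv (φm i j) x ≤ θ)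
    (hinto : ∀ i j, adj i j → φm i j '' I i ⊆ interior (I j))
    (hIdisj : ∀ i j, i ≠ j → Disjoint (I i) (I j))
    (hθ0 : 0 < θ) (hθ1 : θ < 1)
    (hM : ∀ i : Fin N, ∀ y ∈ I i, |deriv τ y| ≤ M)
    (hKa' : ∀ (w : ℕ → Fin N), (∀ n, adj (w n) (w (n+1))) → ∀ x : ℝ,
      x ∈ Kiter I adj φm a → x ∈ I (w 0) → (x, zetaW φm τ w x) ∈ T)
    (hmin' : ∀ p ∈ T, ∀ i j j' : Fin N, p.1 ∈ I i → adj i j → adj i j' →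
      canMap τ (φm i j) p ∈ T → canMap τ (φm i j') p ∈ T → j = j')
    (w w' : ℕ → Fin N) (hadm : ∀ n, adj (w n) (w (n+1)))
    (hadm' : ∀ n, adj (w' n) (w' (n+1))) (h0 : w 0 = w' 0) (h1 : w 1 ≠ w' 1)
    {x : ℝ} (hK : x ∈ Kiter I adj φm a) (hI : x ∈ I (w 0)) :
    zetaW φm τ w x ≠ zetaW φm τ w' x := by
  intro heq
  apply h1
  have hI' : x ∈ I (w' 0) := by rw [← h0]; exact hI
  have hp : (x, zetaW φm τ w x) ∈ T := hKa' w hadm x hK hI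
  have hq : canMap τ (φm (w 0) (w 1)) (x, zetaW φm τ w x) ∈ T := by
    rw [canMap_zeta hsmooth hcontr hinto hθ0 hθ1 hM w hadm hI]
    exact hKa' (sh 1 w) (sh_adm w hadm 1) _
      (Kiter_stable hIdisj hinto hK hI (hadm 0))
      (show φm (w 0) (w 1) x ∈ I (w 1) from
        interior_subset (hinto _ _ (hadm 0) ⟨x, hI, rfl⟩))
  have hq' : canMap τ (φm (w 0) (w' 1)) (x, zetaW φm τ w x) ∈ T := by
    rw [heq, h0]
    rw [canMap_zeta hsmooth hcontr hinto hθ0 hθ1 hM w' hadm' hI']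
    exact hKa' (sh 1 w') (sh_adm w' hadm' 1) _
      (Kiter_stable hIdisj hinto hK hI' (hadm' 0))
      (show φm (w' 0) (w' 1) x ∈ I (w' 1) from
        interior_subset (hinto _ _ (hadm' 0) ⟨x, hI', rfl⟩))
  exact hmin' _ hp (w 0) (w 1) (w' 1) hI (hadm 0) (by rw [h0]; exact hadm' 0) hq hq'

end SLSaux

open SLSaux

/-- **Separation of stable leaves under minimal captivity** (Lemma 7.8, second
inequality). Under the minimal captivity assumption, there is `C > 0` such that
for any two admissible right-infinite words with the same first letter, first
differing at position `n₁ ≥ 1`, and any `x ∈ K_a ∩ I_{w_0}`: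
`|ζ_{w₊}(x) − ζ_{w'₊}(x)| ≥ C (φ_{w_{0,n₁−1}})'(x)`. -/
theorem stable_leaf_separation
    {N : ℕ} (hN : 1 ≤ N)
    (I : Fin N → Set ℝ)
    (hIcc : ∀ i, ∃ a b : ℝ, a ≤ b ∧ I i = Set.Icc a b)
    (hIdisj : ∀ i j, i ≠ j → Disjoint (I i) (I j))
    (adj : Fin N → Fin N → Prop)
    (htrans : ∃ T : ℕ, 0 < T ∧ ∀ i j, ∃ p : ℕ → Fin N,
      p 0 = i ∧ p T = j ∧ ∀ k < T, adj (p k) (p (k + 1)))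
    (φm : Fin N → Fin N → ℝ → ℝ)
    (θ : ℝ) (hθ0 : 0 < θ) (hθ1 : θ < 1)
    (hsmooth : ∀ i j, adj i j → ContDiff ℝ (⊤ : ℕ∞) (φm i j))
    (hcontr : ∀ i j, adj i j → ∀ x ∈ I i, 0 < deriv (φm i j) x ∧ deriv (φm i j) x ≤ θ)
    (hinto : ∀ i j, adj i j → φm i j '' I i ⊆ interior (I j))
    (hsep : ∀ i j k l, adj i j → adj k l → (i, j) ≠ (k, l) →
      Disjoint (φm i j '' I i) (φm k l '' I k))
    (τ : ℝ → ℝ) (hτ : ContDiff ℝ (⊤ : ℕ∞) τ)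
    (ε : ℝ) (hε : 0 < ε)
    (hmincapt : ∀ p ∈ trappedPhaseNbhd I adj φm τ ε, ∀ i j j' : Fin N,
      p.1 ∈ I i → adj i j → adj i j' →
      canMap τ (φm i j) p ∈ trappedPhaseNbhd I adj φm τ ε →
      canMap τ (φm i j') p ∈ trappedPhaseNbhd I adj φm τ ε → j = j')
    (a : ℕ)
    (hKa : ∀ w : Wplus N adj, ∀ x ∈ Kiter I adj φm a ∩ I (w.1 0),
      (x, zetaW φm τ w.1 x) ∈ trappedPhaseNbhd I adj φm τ ε) :
    ∃ C : ℝ, 0 < C ∧ ∀ w w' : Wplus N adj, w.1 0 = w'.1 0 →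
      ∀ n₁ : ℕ, 1 ≤ n₁ → (∀ k < n₁, w.1 k = w'.1 k) → w.1 n₁ ≠ w'.1 n₁ →
      ∀ x ∈ Kiter I adj φm a ∩ I (w.1 0),
        C * deriv (compFwd φm w.1 (n₁ - 1)) x ≤ |zetaW φm τ w.1 x - zetaW φm τ w'.1 x| := by
  classical
  have hIc : ∀ i, IsCompact (I i) := by
    intro i
    obtain ⟨c, d, _, he⟩ := hIcc i
    rw [he]; exact isCompact_Icc
  obtain ⟨M0, hM0⟩ := (isCompact_iUnion hIc).exists_bound_of_continuousOn
    ((hτ.continuous_deriv (by exact_mod_cast le_top)).continuousOn)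
  have hM : ∀ i : Fin N, ∀ y ∈ I i, |deriv τ y| ≤ M0 := fun i y hy => by
    simpa [Real.norm_eq_abs] using hM0 y (Set.mem_iUnion.2 ⟨i, hy⟩)
  have hKa' : ∀ (w : ℕ → Fin N), (∀ n, adj (w n) (w (n+1))) → ∀ x : ℝ,
      x ∈ Kiter I adj φm a → x ∈ I (w 0) →
      (x, zetaW φm τ w x) ∈ trappedPhaseNbhd I adj φm τ ε :=
    fun w hw x h1 h2 => hKa ⟨w, hw⟩ x ⟨h1, h2⟩
  set E : Set (((ℕ → Fin N) × (ℕ → Fin N)) × ℝ) :=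
    {z | (∀ n, adj (z.1.1 n) (z.1.1 (n+1))) ∧ (∀ n, adj (z.1.2 n) (z.1.2 (n+1))) ∧
      z.1.1 0 = z.1.2 0 ∧ z.1.1 1 ≠ z.1.2 1 ∧ z.2 ∈ Kiter I adj φm a ∧
      z.2 ∈ I (z.1.1 0)} with hEdef
  set G : ((ℕ → Fin N) × (ℕ → Fin N)) × ℝ → ℝ :=
    fun z => |zetaW φm τ z.1.1 z.2 - zetaW φm τ z.1.2 z.2| with hGdef
  have hGpos : ∀ z ∈ E, 0 < G z := fun z hz =>
    abs_pos.2 (sub_ne_zero.2 (zeta_ne hsmooth hcontr hinto hIdisj hθ0 hθ1 hM hKa' hmincapt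
      z.1.1 z.1.2 hz.1 hz.2.1 hz.2.2.1 hz.2.2.2.1 hz.2.2.2.2.1 hz.2.2.2.2.2))
  have hGcont : ContinuousOn G E := by
    have hmap1 : Continuous (fun z : ((ℕ → Fin N) × (ℕ → Fin N)) × ℝ => (z.1.1, z.2)) :=
      (continuous_fst.comp continuous_fst).prodMk continuous_snd
    have hmap2 : Continuous (fun z : ((ℕ → Fin N) × (ℕ → Fin N)) × ℝ => (z.1.2, z.2)) :=
      (continuous_snd.comp continuous_fst).prodMk continuous_snd
    have hz1 := (contOn_zeta hsmooth hcontr hinto hθ0 hθ1 hτ hM).comp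
      hmap1.continuousOn (fun z (hz : z ∈ E) => ⟨hz.1, hz.2.2.2.2.2⟩)
    have hz2 := (contOn_zeta hsmooth hcontr hinto hθ0 hθ1 hτ hM).comp
      hmap2.continuousOn (fun z (hz : z ∈ E) => ⟨hz.2.1, by
        show z.2 ∈ I (z.1.2 0)
        rw [← hz.2.2.1]; exact hz.2.2.2.2.2⟩)
    exact (hz1.sub hz2).abs
  have hEclosed : IsClosed E := by
    have hc11 : Continuous (fun z : ((ℕ → Fin N) × (ℕ → Fin N)) × ℝ => z.1.1) :=
      continuous_fst.comp continuous_fst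
    have hc12 : Continuous (fun z : ((ℕ → Fin N) × (ℕ → Fin N)) × ℝ => z.1.2) :=
      continuous_snd.comp continuous_fst
    have h1 : IsClosed {z : ((ℕ → Fin N) × (ℕ → Fin N)) × ℝ |
        ∀ n, adj (z.1.1 n) (z.1.1 (n+1))} := by
      have he : {z : ((ℕ → Fin N) × (ℕ → Fin N)) × ℝ | ∀ n, adj (z.1.1 n) (z.1.1 (n+1))}
          = ⋂ n : ℕ, (fun z : ((ℕ → Fin N) × (ℕ → Fin N)) × ℝ => (z.1.1 n, z.1.1 (n+1))) ⁻¹'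
            {q : Fin N × Fin N | adj q.1 q.2} := by
        ext z; simp
      rw [he]
      exact isClosed_iInter fun n => (isClosed_discrete _).preimage
        (((continuous_apply n).comp hc11).prodMk ((continuous_apply (n+1)).comp hc11))
    have h2 : IsClosed {z : ((ℕ → Fin N) × (ℕ → Fin N)) × ℝ |
        ∀ n, adj (z.1.2 n) (z.1.2 (n+1))} := by
      have he : {z : ((ℕ → Fin N) × (ℕ → Fin N)) × ℝ | ∀ n, adj (z.1.2 n) (z.1.2 (n+1))}
          = ⋂ n : ℕ, (fun z : ((ℕ → Fin N) × (ℕ → Fin N)) × ℝ => (z.1.2 n, z.1.2 (n+1))) ⁻¹'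
            {q : Fin N × Fin N | adj q.1 q.2} := by
        ext z; simp
      rw [he]
      exact isClosed_iInter fun n => (isClosed_discrete _).preimage
        (((continuous_apply n).comp hc12).prodMk ((continuous_apply (n+1)).comp hc12))
    have h3 : IsClosed {z : ((ℕ → Fin N) × (ℕ → Fin N)) × ℝ | z.1.1 0 = z.1.2 0} := by
      have he : {z : ((ℕ → Fin N) × (ℕ → Fin N)) × ℝ | z.1.1 0 = z.1.2 0}
          = (fun z : ((ℕ → Fin N) × (ℕ → Fin N)) × ℝ => (z.1.1 0, z.1.2 0)) ⁻¹'
            {q : Fin N × Fin N | q.1 = q.2} := by ext z; simp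
      rw [he]
      exact (isClosed_discrete _).preimage
        (((continuous_apply 0).comp hc11).prodMk ((continuous_apply 0).comp hc12))
    have h4 : IsClosed {z : ((ℕ → Fin N) × (ℕ → Fin N)) × ℝ | z.1.1 1 ≠ z.1.2 1} := by
      have he : {z : ((ℕ → Fin N) × (ℕ → Fin N)) × ℝ | z.1.1 1 ≠ z.1.2 1}
          = (fun z : ((ℕ → Fin N) × (ℕ → Fin N)) × ℝ => (z.1.1 1, z.1.2 1)) ⁻¹'
            {q : Fin N × Fin N | q.1 ≠ q.2} := by ext z; simp
      rw [he]
      exact (isClosed_discrete _).preimage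
        (((continuous_apply 1).comp hc11).prodMk ((continuous_apply 1).comp hc12))
    have h5 : IsClosed {z : ((ℕ → Fin N) × (ℕ → Fin N)) × ℝ | z.2 ∈ Kiter I adj φm a} :=
      (Kiter_isCompact hIcc hsmooth a).isClosed.preimage continuous_snd
    have h6 : IsClosed {z : ((ℕ → Fin N) × (ℕ → Fin N)) × ℝ | z.2 ∈ I (z.1.1 0)} := by
      have he : {z : ((ℕ → Fin N) × (ℕ → Fin N)) × ℝ | z.2 ∈ I (z.1.1 0)}
          = ⋃ i : Fin N, ((fun z : ((ℕ → Fin N) × (ℕ → Fin N)) × ℝ => z.1.1 0) ⁻¹' {i}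
              ∩ {z | z.2 ∈ I i}) := by
        ext z
        simp only [Set.mem_setOf_eq, Set.mem_iUnion, Set.mem_inter_iff, Set.mem_preimage,
          Set.mem_singleton_iff]
        constructor
        · intro h; exact ⟨z.1.1 0, rfl, h⟩
        · rintro ⟨i, hi, h⟩; rw [hi]; exact h
      rw [he]
      exact isClosed_iUnion_of_finite fun i =>
        ((isClosed_discrete _).preimage ((continuous_apply 0).comp hc11)).inter
          ((hIc i).isClosed.preimage continuous_snd)
    exact h1.inter (h2.inter (h3.inter (h4.inter (h5.inter h6))))
  have hEcompact : IsCompact E := by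
    apply IsCompact.of_isClosed_subset
      (((isCompact_univ.prod isCompact_univ).prod (isCompact_iUnion hIc))) hEclosed
    intro z hz
    exact ⟨⟨trivial, trivial⟩, Set.mem_iUnion.2 ⟨z.1.1 0, hz.2.2.2.2.2⟩⟩
  have hmk : ∀ w w' : Wplus N adj, w.1 0 = w'.1 0 →
      ∀ n₁ : ℕ, 1 ≤ n₁ → (∀ k < n₁, w.1 k = w'.1 k) → w.1 n₁ ≠ w'.1 n₁ →
      ∀ x ∈ Kiter I adj φm a ∩ I (w.1 0),
      ((sh (n₁ - 1) w.1, sh (n₁ - 1) w'.1), compFwd φm w.1 (n₁ - 1) x) ∈ E := by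
    intro w w' h00 n₁ hn₁ hagree hnedif x hx
    have hm : (n₁ - 1) + 1 = n₁ := by omega
    refine ⟨sh_adm w.1 w.2 (n₁-1), sh_adm w'.1 w'.2 (n₁-1), ?_, ?_, ?_, ?_⟩
    · show w.1 ((n₁-1) + 0) = w'.1 ((n₁-1) + 0)
      exact hagree (n₁ - 1) (by omega)
    · show w.1 ((n₁-1) + 1) ≠ w'.1 ((n₁-1) + 1)
      rw [hm]; exact hnedif
    · exact compFwd_mem_Kiter hIdisj hinto w.1 w.2 (n₁-1) hx.1 hx.2
    · show compFwd φm w.1 (n₁-1) x ∈ I (w.1 ((n₁-1) + 0))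
      exact mem_compFwd hinto w.1 (n₁-1) (fun n _ => w.2 n) hx.2
  by_cases hne : E.Nonempty
  · obtain ⟨z0, hz0, hmin⟩ := hEcompact.exists_isMinOn hne hGcont
    refine ⟨G z0, hGpos z0 hz0, ?_⟩
    intro w w' h00 n₁ hn₁ hagree hnedif x hx
    set m := n₁ - 1 with hmdef
    have hagree' : ∀ j ≤ m, w.1 j = w'.1 j := fun j hj => hagree j (by omega)
    have hdiff := zeta_diff hsmooth hcontr hinto hθ0 hθ1 hM w.1 w'.1 w.2 w'.2 m hagree' hx.2
    have hzE := hmk w w' h00 n₁ hn₁ hagree hnedif x hx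
    have hC : G z0 ≤ G ((sh m w.1, sh m w'.1), compFwd φm w.1 m x) :=
      (isMinOn_iff.mp hmin) _ hzE
    have hDpos := (deriv_compFwd_pos hsmooth hcontr hinto hθ0 w.1 m
      (fun n _ => w.2 n) hx.2).1
    calc G z0 * deriv (compFwd φm w.1 m) x
        ≤ G ((sh m w.1, sh m w'.1), compFwd φm w.1 m x) * deriv (compFwd φm w.1 m) x :=
          mul_le_mul_of_nonneg_right hC hDpos.le
      _ = |zetaW φm τ w.1 x - zetaW φm τ w'.1 x| := by
          rw [hdiff, abs_mul, abs_of_pos hDpos]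
          show |zetaW φm τ (sh m w.1) _ - zetaW φm τ (sh m w'.1) _| * _ = _
          ring
  · refine ⟨1, one_pos, ?_⟩
    intro w w' h00 n₁ hn₁ hagree hnedif x hx
    exact absurd ⟨_, hmk w w' h00 n₁ hn₁ hagree hnedif x hx⟩ hne
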